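/- Let p(x) = Σ_{i=0}^{L} a_i x^i be a polynomial with |p(x)| ≤ 1 for all x ∈ [−1, 1]. Then Σ_{i=0}^{L} |a_i|² ≤ (1 + √2)^{2L}. -/

import Mathlib

open Polynomial Complex Finset

/-- On the unit circle, a real polynomial bounded by 1 on [-1,1] is bounded by (1+√2)^L. -/
private lemma aux_circle (L : ℕ) (p : Polynomial ℝ) (hdeg : p.natDegree ≤ L)
    (hb : ∀ x ∈ Set.Icc (-1 : ℝ) 1, |p.eval x| ≤ 1) (z : ℂ) (hz : ‖z‖ = 1) :
    ‖(p.map Complex.ofRealHom).eval z‖ ≤ (1 + Real.sqrt 2) ^ L := by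
  set P : ℂ[X] := p.map Complex.ofRealHom with hP
  have hPdeg : P.natDegree < L + 1 :=
    lt_of_le_of_lt (le_trans natDegree_map_le hdeg) (Nat.lt_succ_self L)
  have hPreal : ∀ x : ℝ, P.eval (x : ℂ) = ((p.eval x : ℝ) : ℂ) := fun x => by
    rw [hP, eval_map]; exact eval₂_at_apply _ _
  set q : ℂ[X] :=
    ∑ i ∈ range (L + 1), C ((p.coeff i : ℝ) : ℂ) * (X ^ (L - i) * ((X ^ 2 + 1) * C (2⁻¹ : ℂ)) ^ i)
    with hq
  have hBdeg : (((X : ℂ[X]) ^ 2 + 1) * C (2⁻¹ : ℂ)).natDegree ≤ 2 := by compute_degree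
  have hqdeg : q.natDegree < 2 * L + 1 := by
    refine lt_of_le_of_lt (natDegree_sum_le_of_forall_le _ _ fun i hi => ?_) (Nat.lt_succ_self _)
    have hi' : i ≤ L := Nat.lt_succ_iff.mp (mem_range.mp hi)
    refine le_trans natDegree_mul_le ?_
    rw [natDegree_C, zero_add]
    refine le_trans natDegree_mul_le ?_
    have h2 : ((((X : ℂ[X]) ^ 2 + 1) * C (2⁻¹ : ℂ)) ^ i).natDegree ≤ i * 2 :=
      le_trans natDegree_pow_le (Nat.mul_le_mul_left i hBdeg)
    have h3 : ((X : ℂ[X]) ^ (L - i)).natDegree ≤ L - i := natDegree_X_pow_le _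
    omega
  have hq_eval : ∀ w : ℂ, w ≠ 0 → q.eval w = w ^ L * P.eval ((w + w⁻¹) * 2⁻¹) := by
    intro w hw
    rw [hq, eval_finset_sum, eval_eq_sum_range' hPdeg, Finset.mul_sum]
    refine Finset.sum_congr rfl fun i hi => ?_
    have hi' : i ≤ L := Nat.lt_succ_iff.mp (mem_range.mp hi)
    rw [hP, coeff_map]
    simp only [eval_mul, eval_pow, eval_C, eval_X, eval_add, eval_one]
    have hwi : w ^ L = w ^ (L - i) * w ^ i := by rw [← pow_add]; congr 1; omega
    have hkey : (w ^ 2 + 1) * 2⁻¹ = w * ((w + w⁻¹) * 2⁻¹) := by field_simp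
    rw [hkey, mul_pow w, hwi]
    simp only [Complex.ofRealHom_eq_coe]
    ring
  have hq_circ : ∀ w : ℂ, ‖w‖ = 1 → ‖q.eval w‖ ≤ 1 := by
    intro w hw
    have hw0 : w ≠ 0 := by
      intro h; rw [h, norm_zero] at hw; exact one_ne_zero hw.symm
    have hinv : w⁻¹ = starRingEnd ℂ w :=
      Complex.inv_eq_conj hw
    have hre : (w + w⁻¹) * 2⁻¹ = ((w.re : ℝ) : ℂ) := by
      rw [hinv, Complex.add_conj]; push_cast; ring
    have hrebd : |w.re| ≤ 1 := by
      have := Complex.abs_re_le_norm w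
      rwa [hw] at this
    rw [hq_eval w hw0, hre, hPreal, norm_mul, norm_pow, hw, one_pow, one_mul,
      Complex.norm_real, Real.norm_eq_abs]
    exact hb _ (Set.mem_Icc.mpr (abs_le.mp hrebd))
  set r : ℂ[X] := ∑ j ∈ range (2 * L + 1), C (q.coeff j) * X ^ (2 * L - j) with hr
  have hr_eval : ∀ u : ℂ, u ≠ 0 → r.eval u = u ^ (2 * L) * q.eval u⁻¹ := by
    intro u hu
    rw [hr, eval_finset_sum, eval_eq_sum_range' hqdeg, Finset.mul_sum]
    refine Finset.sum_congr rfl fun j hj => ?_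
    have hj' : j ≤ 2 * L := Nat.lt_succ_iff.mp (mem_range.mp hj)
    simp only [eval_mul, eval_pow, eval_C, eval_X, inv_pow]
    rw [pow_sub₀ u hu hj']; ring
  have hr_disk : ∀ u : ℂ, ‖u‖ ≤ 1 → ‖r.eval u‖ ≤ 1 := by
    intro u hu
    refine Complex.norm_le_of_forall_mem_frontier_norm_le (U := Metric.ball (0 : ℂ) 1)
      Metric.isBounded_ball (r.differentiable.diffContOnCl) (fun w hw => ?_) ?_
    · rw [frontier_ball (0 : ℂ) one_ne_zero, mem_sphere_zero_iff_norm] at hw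
      have hw0 : w ≠ 0 := by
        intro h; rw [h, norm_zero] at hw; exact one_ne_zero hw.symm
      rw [hr_eval w hw0, norm_mul, norm_pow, hw, one_pow, one_mul]
      exact hq_circ w⁻¹ (by rw [norm_inv, hw]; norm_num)
    · rw [closure_ball (0 : ℂ) one_ne_zero]
      exact Metric.mem_closedBall.mpr (by simpa using hu)
  have hq_big : ∀ w : ℂ, 1 ≤ ‖w‖ → ‖q.eval w‖ ≤ ‖w‖ ^ (2 * L) := by
    intro w hw1
    have hwpos : (0 : ℝ) < ‖w‖ := lt_of_lt_of_le one_pos hw1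
    have hw0 : w ≠ 0 := by
      intro h; rw [h, norm_zero] at hwpos; exact lt_irrefl 0 hwpos
    have h := hr_disk w⁻¹ (by rw [norm_inv]; exact inv_le_one_of_one_le₀ hw1)
    rw [hr_eval w⁻¹ (inv_ne_zero hw0), inv_inv, norm_mul, norm_pow, norm_inv] at h
    have hprod : ‖w‖ ^ (2 * L) * ‖w‖⁻¹ ^ (2 * L) = 1 := by
      rw [← mul_pow, mul_inv_cancel₀ (ne_of_gt hwpos), one_pow]
    calc ‖q.eval w‖ = ‖w‖ ^ (2 * L) * (‖w‖⁻¹ ^ (2 * L) * ‖q.eval w‖) := by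
          rw [← mul_assoc, hprod, one_mul]
      _ ≤ ‖w‖ ^ (2 * L) * 1 := mul_le_mul_of_nonneg_left h (by positivity)
      _ = ‖w‖ ^ (2 * L) := mul_one _
  obtain ⟨s, hs⟩ := IsAlgClosed.exists_pow_nat_eq (k := ℂ) (z ^ 2 - 1) zero_lt_two
  have hzs : (z + s) * (z - s) = 1 := by linear_combination -hs
  have hse : ‖s‖ ≤ Real.sqrt 2 := by
    have h2 : ‖s‖ ^ 2 ≤ 2 := by
      calc ‖s‖ ^ 2 = ‖s ^ 2‖ := (norm_pow _ _).symm
        _ = ‖z ^ 2 - 1‖ := by rw [hs]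
        _ ≤ ‖z ^ 2‖ + ‖(1 : ℂ)‖ := norm_sub_le _ _
        _ = 2 := by rw [norm_pow, hz]; norm_num
    calc ‖s‖ = Real.sqrt (‖s‖ ^ 2) := (Real.sqrt_sq (norm_nonneg s)).symm
      _ ≤ Real.sqrt 2 := Real.sqrt_le_sqrt h2
  have hzb : ∀ t : ℂ, t = z + s ∨ t = z - s → ‖t‖ ≤ 1 + Real.sqrt 2 := by
    rintro t (rfl | rfl)
    · calc ‖z + s‖ ≤ ‖z‖ + ‖s‖ := norm_add_le _ _
        _ ≤ 1 + Real.sqrt 2 := by rw [hz]; linarith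
    · calc ‖z - s‖ ≤ ‖z‖ + ‖s‖ := norm_sub_le _ _
        _ ≤ 1 + Real.sqrt 2 := by rw [hz]; linarith
  have hroot : ∀ t : ℂ, t = z + s ∨ t = z - s → t ^ 2 + 1 = 2 * z * t := by
    rintro t (rfl | rfl)
    · linear_combination hs
    · linear_combination hs
  obtain ⟨w, hwor, hw1⟩ : ∃ w : ℂ, (w = z + s ∨ w = z - s) ∧ 1 ≤ ‖w‖ := by
    by_cases h : 1 ≤ ‖z + s‖
    · exact ⟨z + s, Or.inl rfl, h⟩
    · refine ⟨z - s, Or.inr rfl, ?_⟩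
      push_neg at h
      have hne : ‖z + s‖ * ‖z - s‖ = 1 := by rw [← norm_mul, hzs, norm_one]
      nlinarith [norm_nonneg (z - s), norm_nonneg (z + s)]
  have hwpos : (0 : ℝ) < ‖w‖ := lt_of_lt_of_le one_pos hw1
  have hw0 : w ≠ 0 := by
    intro h; rw [h, norm_zero] at hwpos; exact lt_irrefl 0 hwpos
  have hwz : (w + w⁻¹) * 2⁻¹ = z := by
    have h1 := hroot w hwor
    field_simp
    linear_combination h1
  have hkey := hq_big w hw1
  rw [hq_eval w hw0, hwz, norm_mul, norm_pow] at hkey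
  have h2L : ‖w‖ ^ (2 * L) = ‖w‖ ^ L * ‖w‖ ^ L := by rw [← pow_add]; congr 1; omega
  rw [h2L] at hkey
  have hPz : ‖P.eval z‖ ≤ ‖w‖ ^ L :=
    le_of_mul_le_mul_left hkey (by positivity)
  exact hPz.trans (pow_le_pow_left₀ (norm_nonneg w) (hzb w hwor) L)

theorem stmt_12 (L : ℕ) (p : Polynomial ℝ) (hdeg : p.natDegree ≤ L)
    (hb : ∀ x ∈ Set.Icc (-1 : ℝ) 1, |p.eval x| ≤ 1) :
    ∑ i ∈ Finset.range (L + 1), (p.coeff i) ^ 2 ≤ (1 + Real.sqrt 2) ^ (2 * L) := by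
  set P : ℂ[X] := p.map Complex.ofRealHom with hP
  have hPdeg : P.natDegree < L + 1 :=
    lt_of_le_of_lt (le_trans natDegree_map_le hdeg) (Nat.lt_succ_self L)
  set N : ℕ := L + 1 with hN
  set ω : ℂ := Complex.exp (2 * Real.pi * I / N) with hω
  have hprim : IsPrimitiveRoot ω N := Complex.isPrimitiveRoot_exp N (Nat.succ_ne_zero L)
  have hω0 : ω ≠ 0 := Complex.exp_ne_zero _
  have hωabs : ‖ω‖ = 1 := by
    have harg : (2 * (Real.pi : ℂ) * I / N) = ((2 * Real.pi / N : ℝ) : ℂ) * I := by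
      push_cast; ring
    rw [hω, harg, Complex.norm_exp_ofReal_mul_I]
  have hωk_norm : ∀ k : ℕ, ‖ω ^ k‖ = 1 := fun k => by
    rw [norm_pow, hωabs, one_pow]
  have hM : ∀ k : ℕ, ‖P.eval (ω ^ k)‖ ≤ (1 + Real.sqrt 2) ^ L := fun k =>
    aux_circle L p hdeg hb (ω ^ k) (hωk_norm k)
  -- orthogonality
  have hsum : ∀ j j' : ℕ, j < N → j' < N →
      ∑ k ∈ range N, ((ω ^ k) ^ j * ((ω ^ k)⁻¹) ^ j') = if j = j' then (N : ℂ) else 0 := by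
    intro j j' hj hj'
    set ζ : ℂ := ω ^ ((j : ℤ) - j') with hζ
    have hζk : ∀ k : ℕ, (ω ^ k) ^ j * ((ω ^ k)⁻¹) ^ j' = ζ ^ k := by
      intro k
      have hcast : ((k * j : ℕ) : ℤ) - ((k * j' : ℕ) : ℤ) = ((j : ℤ) - j') * k := by
        push_cast; ring
      calc (ω ^ k) ^ j * ((ω ^ k)⁻¹) ^ j'
          = ω ^ (k * j) * (ω ^ (k * j'))⁻¹ := by rw [← pow_mul, inv_pow, ← pow_mul]
        _ = ω ^ ((k * j : ℕ) : ℤ) * ω ^ (-((k * j' : ℕ) : ℤ)) := by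
            rw [zpow_natCast, zpow_neg, zpow_natCast]
        _ = ω ^ (((k * j : ℕ) : ℤ) - ((k * j' : ℕ) : ℤ)) := by
            rw [sub_eq_add_neg, zpow_add₀ hω0]
        _ = ω ^ (((j : ℤ) - j') * k) := by rw [hcast]
        _ = ζ ^ k := by rw [hζ, ← zpow_natCast (ω ^ ((j : ℤ) - j')), ← zpow_mul]
    rw [Finset.sum_congr rfl fun k _ => hζk k]
    by_cases h : j = j'
    · subst h
      have : ζ = 1 := by rw [hζ, sub_self, zpow_zero]
      simp [this, Finset.card_range]
    · have hζ1 : ζ ≠ 1 := by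
        intro heq
        have hdvd := (hprim.zpow_eq_one_iff_dvd _).mp heq
        have hne0 : (j : ℤ) - j' ≠ 0 := by
          intro h0; apply h; omega
        have hle := Int.le_of_dvd (abs_pos.mpr hne0) ((dvd_abs _ _).mpr hdvd)
        have habslt : |(j : ℤ) - j'| < N := abs_lt.mpr (by constructor <;> push_cast <;> omega)
        omega
      have hζN : ζ ^ N = 1 := by
        rw [hζ, ← zpow_natCast (ω ^ ((j : ℤ) - j')), ← zpow_mul, mul_comm, zpow_mul,
          zpow_natCast, hprim.pow_eq_one, one_zpow]
      rw [geom_sum_eq hζ1, hζN, sub_self, zero_div, if_neg h]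
  -- Parseval (discrete)
  have hPev : ∀ k : ℕ, P.eval (ω ^ k) = ∑ j ∈ range N, ((p.coeff j : ℝ) : ℂ) * (ω ^ k) ^ j := by
    intro k
    rw [eval_eq_sum_range' hPdeg]
    exact Finset.sum_congr rfl fun j _ => by rw [hP, coeff_map]; rfl
  have hPconj : ∀ k : ℕ, (starRingEnd ℂ) (P.eval (ω ^ k)) =
      ∑ j ∈ range N, ((p.coeff j : ℝ) : ℂ) * ((ω ^ k)⁻¹) ^ j := by
    intro k
    rw [hPev, map_sum]
    refine Finset.sum_congr rfl fun j _ => ?_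
    rw [map_mul, map_pow, Complex.conj_ofReal,
      ← Complex.inv_eq_conj (hωk_norm k)]
  have key : ∑ k ∈ range N, (P.eval (ω ^ k) * (starRingEnd ℂ) (P.eval (ω ^ k))) =
      (N : ℂ) * ∑ j ∈ range N, ((p.coeff j : ℝ) : ℂ) ^ 2 := by
    calc ∑ k ∈ range N, (P.eval (ω ^ k) * (starRingEnd ℂ) (P.eval (ω ^ k)))
        = ∑ k ∈ range N, ∑ j ∈ range N, ∑ j' ∈ range N,
            (((p.coeff j : ℝ) : ℂ) * ((p.coeff j' : ℝ) : ℂ)) * ((ω ^ k) ^ j * ((ω ^ k)⁻¹) ^ j') := by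
          refine Finset.sum_congr rfl fun k _ => ?_
          rw [hPconj k, hPev k, Finset.sum_mul_sum]
          exact Finset.sum_congr rfl fun j _ => Finset.sum_congr rfl fun j' _ => by ring
      _ = ∑ j ∈ range N, ∑ j' ∈ range N,
            (((p.coeff j : ℝ) : ℂ) * ((p.coeff j' : ℝ) : ℂ)) *
              ∑ k ∈ range N, ((ω ^ k) ^ j * ((ω ^ k)⁻¹) ^ j') := by
          rw [Finset.sum_comm]
          refine Finset.sum_congr rfl fun j _ => ?_
          rw [Finset.sum_comm]
          exact Finset.sum_congr rfl fun j' _ => (Finset.mul_sum _ _ _).symm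
      _ = ∑ j ∈ range N, (((p.coeff j : ℝ) : ℂ) * ((p.coeff j : ℝ) : ℂ)) * (N : ℂ) := by
          refine Finset.sum_congr rfl fun j hj => ?_
          rw [Finset.sum_congr rfl fun j' hj' =>
            by rw [hsum j j' (mem_range.mp hj) (mem_range.mp hj')]]
          simp only [mul_ite, mul_zero]
          rw [Finset.sum_ite_eq (range N) j fun j' => ((p.coeff j : ℝ) : ℂ) * ((p.coeff j' : ℝ) : ℂ) * (N : ℂ)]
          rw [if_pos hj]
      _ = (N : ℂ) * ∑ j ∈ range N, ((p.coeff j : ℝ) : ℂ) ^ 2 := by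
          rw [Finset.mul_sum]
          exact Finset.sum_congr rfl fun j _ => by ring
  have hreal : (N : ℝ) * ∑ j ∈ range N, (p.coeff j) ^ 2 =
      ∑ k ∈ range N, Complex.normSq (P.eval (ω ^ k)) := by
    have h := key
    rw [Finset.sum_congr rfl fun k _ => Complex.mul_conj (P.eval (ω ^ k))] at h
    exact_mod_cast h.symm
  have hbound : ∑ k ∈ range N, Complex.normSq (P.eval (ω ^ k)) ≤
      (N : ℝ) * ((1 + Real.sqrt 2) ^ L) ^ 2 := by
    calc ∑ k ∈ range N, Complex.normSq (P.eval (ω ^ k))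
        ≤ ∑ _k ∈ range N, ((1 + Real.sqrt 2) ^ L) ^ 2 := by
          refine Finset.sum_le_sum fun k _ => ?_
          rw [Complex.normSq_eq_norm_sq]
          exact pow_le_pow_left₀ (norm_nonneg _) (hM k) 2
      _ = (N : ℝ) * ((1 + Real.sqrt 2) ^ L) ^ 2 := by
          rw [Finset.sum_const, card_range, nsmul_eq_mul]
  have hNpos : (0 : ℝ) < N := by positivity
  have hfin : ∑ j ∈ range N, (p.coeff j) ^ 2 ≤ ((1 + Real.sqrt 2) ^ L) ^ 2 := by
    have := hreal.trans_le hbound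
    exact le_of_mul_le_mul_left this hNpos
  calc ∑ i ∈ Finset.range (L + 1), (p.coeff i) ^ 2 ≤ ((1 + Real.sqrt 2) ^ L) ^ 2 := hfin
    _ = (1 + Real.sqrt 2) ^ (2 * L) := by rw [← pow_mul, mul_comm]
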